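/- arXiv:2501.09880 — 2 statements merged into one kernel-verified Lean document; each statement's English description precedes it below -/
import Mathlib

section
/- Let u : 𝕌 → (0, +∞) be a positive harmonic function on the open unit disc. Then for every z ∈ 𝕌, u(z)/u(0) ≥ ( (1+|z|²)/(1−|z|²) + (|∇u(0)|/u(0)) · |z|/(1−|z|²) )⁻¹. -/
open Complex Metric Set Filter
open scoped NNReal ENNReal Topology

lemma clm_ext_complex {E : Type*} [NormedAddCommGroup E] [NormedSpace ℝ E]
    (L₁ L₂ : ℂ →L[ℝ] E) (h1 : L₁ 1 = L₂ 1) (hI : L₁ Complex.I = L₂ Complex.I) : L₁ = L₂ := by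
  ext v
  have hv : (v.re : ℝ) • (1:ℂ) + (v.im : ℝ) • Complex.I = v := by
    simp [Complex.real_smul, Complex.re_add_im]
  rw [← hv, map_add, map_add, map_smul, map_smul, map_smul, map_smul, h1, hI]

lemma holo_g (u : ℂ → ℝ) (hreg : ContDiffOn ℝ 2 u (Metric.ball (0:ℂ) 1))
    (hlap : ∀ z ∈ Metric.ball (0:ℂ) 1,
      fderiv ℝ (fun w => fderiv ℝ u w 1) z 1 +
      fderiv ℝ (fun w => fderiv ℝ u w Complex.I) z Complex.I = 0) :
    DifferentiableOn ℂ
      (fun w => ((fderiv ℝ u w 1 : ℝ) : ℂ) - Complex.I * ((fderiv ℝ u w Complex.I : ℝ) : ℂ))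
      (Metric.ball (0:ℂ) 1) := by
  intro z hz
  apply DifferentiableAt.differentiableWithinAt
  have hball : Metric.ball (0:ℂ) 1 ∈ nhds z := isOpen_ball.mem_nhds hz
  have hcd : ContDiffAt ℝ 2 u z := hreg.contDiffAt hball
  have hcd1 : ContDiffAt ℝ 1 (fderiv ℝ u) z := hcd.fderiv_right (by norm_num)
  have hd2 : DifferentiableAt ℝ (fderiv ℝ u) z := hcd1.differentiableAt (by norm_num)
  set D2 := fderiv ℝ (fderiv ℝ u) z with hD2def
  have hsym : D2 1 Complex.I = D2 Complex.I 1 :=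
    (hcd.isSymmSndFDerivAt (by norm_num)).eq 1 Complex.I
  -- derivatives of p and q
  have hp' : HasFDerivAt (fun w => fderiv ℝ u w 1)
      ((ContinuousLinearMap.apply ℝ ℝ (1:ℂ)).comp D2) z :=
    (ContinuousLinearMap.apply ℝ ℝ (1:ℂ)).hasFDerivAt.comp z hd2.hasFDerivAt
  have hq' : HasFDerivAt (fun w => fderiv ℝ u w Complex.I)
      ((ContinuousLinearMap.apply ℝ ℝ (Complex.I)).comp D2) z :=
    (ContinuousLinearMap.apply ℝ ℝ (Complex.I)).hasFDerivAt.comp z hd2.hasFDerivAt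
  have hlapz : D2 1 1 + D2 Complex.I Complex.I = 0 := by
    have := hlap z hz
    rwa [hp'.fderiv, hq'.fderiv] at this
  -- real derivative of g
  have h1 : HasFDerivAt (fun w => ((fderiv ℝ u w 1 : ℝ) : ℂ))
      (Complex.ofRealCLM.comp ((ContinuousLinearMap.apply ℝ ℝ (1:ℂ)).comp D2)) z :=
    Complex.ofRealCLM.hasFDerivAt.comp z hp'
  have h2 : HasFDerivAt (fun w => ((fderiv ℝ u w Complex.I : ℝ) : ℂ))
      (Complex.ofRealCLM.comp ((ContinuousLinearMap.apply ℝ ℝ (Complex.I)).comp D2)) z :=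
    Complex.ofRealCLM.hasFDerivAt.comp z hq'
  have hg0 : HasFDerivAt
      (fun w => ((fderiv ℝ u w 1 : ℝ) : ℂ) - Complex.I * ((fderiv ℝ u w Complex.I : ℝ) : ℂ))
      ((Complex.ofRealCLM.comp ((ContinuousLinearMap.apply ℝ ℝ (1:ℂ)).comp D2)) -
        Complex.I • (Complex.ofRealCLM.comp ((ContinuousLinearMap.apply ℝ ℝ (Complex.I)).comp D2))) z :=
    h1.sub (h2.const_mul Complex.I)
  -- the complex-linear candidate
  set c : ℂ := ((D2 1 1 : ℝ) : ℂ) - Complex.I * ((D2 1 Complex.I : ℝ) : ℂ) with hc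
  set M : ℂ →L[ℂ] ℂ := c • ContinuousLinearMap.id ℂ ℂ with hM
  have hML : M.restrictScalars ℝ =
      (Complex.ofRealCLM.comp ((ContinuousLinearMap.apply ℝ ℝ (1:ℂ)).comp D2)) -
        Complex.I • (Complex.ofRealCLM.comp ((ContinuousLinearMap.apply ℝ ℝ (Complex.I)).comp D2)) := by
    apply clm_ext_complex
    · simp [hM, hc]
    · simp [hM, hc, hsym]
      have hII : D2 Complex.I Complex.I = -(D2 1 1) := by linarith
      rw [hII]
      push_cast
      ring_nf
      rw [Complex.I_sq]
      ring
  exact ⟨M, hasFDerivAt_of_restrictScalars ℝ hg0 hML⟩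

lemma exists_primitive {g : ℂ → ℂ} (hg : DifferentiableOn ℂ g (Metric.ball (0:ℂ) 1))
    {ρ : ℝ} (hρ0 : 0 < ρ) (hρ1 : ρ < 1) (c₀ : ℂ) :
    ∃ F : ℂ → ℂ, F 0 = c₀ ∧ ∀ w ∈ Metric.ball (0:ℂ) ρ, HasDerivAt F (g w) w := by
  set ρ' : ℝ≥0 := Real.toNNReal ((ρ + 1)/2) with hρ'
  have hρ'val : ((ρ':ℝ)) = (ρ+1)/2 := Real.coe_toNNReal _ (by linarith)
  have hρ'pos : 0 < ρ' := by
    rw [← NNReal.coe_pos, hρ'val]; linarith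
  have hsub : Metric.closedBall (0:ℂ) ρ' ⊆ Metric.ball (0:ℂ) 1 := by
    apply Metric.closedBall_subset_ball
    rw [hρ'val]; linarith
  have hd : DifferentiableOn ℂ g (Metric.closedBall (0:ℂ) ρ') := hg.mono hsub
  have hp := hd.hasFPowerSeriesOnBall hρ'pos
  set p := cauchyPowerSeries g 0 ρ' with hpdef
  set a : ℕ → ℂ := fun n => p.coeff n with ha
  have hρρ' : ρ < ρ' := by rw [hρ'val]; linarith
  have hrad : (Real.toNNReal ρ : ℝ≥0∞) < p.radius := by
    refine lt_of_lt_of_le ?_ hp.r_le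
    rw [ENNReal.coe_lt_coe, ← NNReal.coe_lt_coe, Real.coe_toNNReal _ hρ0.le]
    exact hρρ'
  have hsum : Summable (fun n => ‖p n‖ * ρ ^ n) := by
    have := p.summable_norm_mul_pow hrad
    rwa [Real.coe_toNNReal _ hρ0.le] at this
  refine ⟨fun z => c₀ + ∑' n, (a n / (n+1)) * z^(n+1), ?_, ?_⟩
  · simp
  · intro w hw
    have key : HasDerivAt (fun z => ∑' n, (a n / (n+1)) * z^(n+1))
        (∑' n, a n * w^n) w := by
      refine hasDerivAt_tsum_of_isPreconnected (g := fun n z => (a n / (n+1)) * z^(n+1))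
        (g' := fun n y => a n * y^n) (u := fun n => ‖p n‖ * ρ ^ n)
        hsum isOpen_ball
        (convex_ball (0:ℂ) ρ).isPreconnected ?_ ?_ (mem_ball_self hρ0) ?_ hw
      · intro n y _
        have h := (hasDerivAt_pow (n+1) y).const_mul (a n / (n+1))
        convert h using 1
        · rfl
        have hne : ((n:ℂ) + 1) ≠ 0 := Nat.cast_add_one_ne_zero n
        rw [Nat.add_sub_cancel]
        push_cast
        field_simp
      · intro n y hy
        rw [norm_mul, norm_pow]
        have h1 : ‖a n‖ ≤ ‖p n‖ := by
          have := (p n).le_opNorm (fun _ => (1:ℂ))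
          exact (p.norm_apply_eq_norm_coef (n := n)).ge
        have h2 : ‖y‖ ^ n ≤ ρ ^ n := by
          apply pow_le_pow_left₀ (norm_nonneg _)
          exact le_of_lt (by simpa [Metric.mem_ball] using hy)
        exact mul_le_mul h1 h2 (by positivity) (norm_nonneg _)
      · have : (fun n : ℕ => (a n / (n+1)) * (0:ℂ)^(n+1)) = fun _ => 0 := by
          funext n
          simp
        rw [this]
        exact summable_zero
    have hgw : (∑' n, a n * w^n) = g w := by
      have hmem : w ∈ Metric.eball (0:ℂ) ρ' := by
        rw [Metric.emetric_ball_nnreal]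
        exact Metric.ball_subset_ball hρρ'.le hw
      have := hp.hasSum hmem
      simp only [zero_add] at this
      have heq : (fun n => p n fun _ => w) = fun n => a n * w^n := by
        funext n
        rw [p.apply_eq_pow_smul_coeff, smul_eq_mul]
        ring
      rw [heq] at this
      exact this.tsum_eq
    rw [hgw] at key
    exact key.const_add c₀

lemma re_F (u : ℂ → ℝ) (hreg : ContDiffOn ℝ 2 u (Metric.ball (0:ℂ) 1))
    {ρ : ℝ} (hρ0 : 0 < ρ) (hρ1 : ρ < 1) (F : ℂ → ℂ)
    (hF0 : F 0 = ((u 0 : ℝ) : ℂ))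
    (hF : ∀ w ∈ Metric.ball (0:ℂ) ρ, HasDerivAt F
      (((fderiv ℝ u w 1 : ℝ) : ℂ) - Complex.I * ((fderiv ℝ u w Complex.I : ℝ) : ℂ)) w) :
    ∀ w ∈ Metric.ball (0:ℂ) ρ, (F w).re = u w := by
  have hball : Metric.ball (0:ℂ) ρ ⊆ Metric.ball 0 1 := Metric.ball_subset_ball hρ1.le
  have hkey : ∀ w ∈ Metric.ball (0:ℂ) ρ,
      HasFDerivAt (fun w => u w - (F w).re) (0 : ℂ →L[ℝ] ℝ) w := by
    intro w hw
    have hu : HasFDerivAt u (fderiv ℝ u w) w :=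
      (((hreg.contDiffAt (isOpen_ball.mem_nhds (hball hw))).differentiableAt
        (by norm_num))).hasFDerivAt
    set c : ℂ := ((fderiv ℝ u w 1 : ℝ) : ℂ) - Complex.I * ((fderiv ℝ u w Complex.I : ℝ) : ℂ)
      with hc
    have hFd : HasFDerivAt F (ContinuousLinearMap.smulRight (1 : ℂ →L[ℂ] ℂ) c) w :=
      hasDerivAt_iff_hasFDerivAt.mp (hF w hw)
    have hre : HasFDerivAt (fun w => (F w).re)
        (Complex.reCLM.comp ((ContinuousLinearMap.smulRight (1 : ℂ →L[ℂ] ℂ) c).restrictScalars ℝ))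
        w := Complex.reCLM.hasFDerivAt.comp w (hFd.restrictScalars ℝ)
    have heq : fderiv ℝ u w =
        Complex.reCLM.comp ((ContinuousLinearMap.smulRight (1 : ℂ →L[ℂ] ℂ) c).restrictScalars ℝ) := by
      apply clm_ext_complex
      · simp [hc]
      · simp [hc]
    have h0 := hu.sub hre
    rw [← heq, sub_self] at h0
    exact h0
  intro w hw
  have hdiff : DifferentiableOn ℝ (fun w => u w - (F w).re) (Metric.ball (0:ℂ) ρ) :=
    fun x hx => (hkey x hx).differentiableAt.differentiableWithinAt
  have hfw : ∀ x ∈ Metric.ball (0:ℂ) ρ,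
      fderivWithin ℝ (fun w => u w - (F w).re) (Metric.ball (0:ℂ) ρ) x = 0 := by
    intro x hx
    rw [fderivWithin_of_isOpen isOpen_ball hx]
    exact (hkey x hx).fderiv
  have hconst := (convex_ball (0:ℂ) ρ).is_const_of_fderivWithin_eq_zero hdiff hfw hw
    (mem_ball_self hρ0)
  have : u 0 - (F 0).re = 0 := by rw [hF0]; simp
  rw [this] at hconst
  linarith [hconst]

lemma grad_norm (u : ℂ → ℝ) (hd : DifferentiableAt ℝ u 0) :
    ‖gradient u 0‖ = ‖((fderiv ℝ u 0 1 : ℝ) : ℂ) -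
      Complex.I * ((fderiv ℝ u 0 Complex.I : ℝ) : ℂ)‖ := by
  set x : ℂ := ⟨fderiv ℝ u 0 1, fderiv ℝ u 0 Complex.I⟩ with hx
  have hgrad : HasGradientAt u x 0 := by
    rw [hasGradientAt_iff_hasFDerivAt]
    have heq : (InnerProductSpace.toDual ℝ ℂ) x = fderiv ℝ u 0 := by
      apply clm_ext_complex
      · simp [InnerProductSpace.toDual_apply_apply, Complex.inner, hx]
      · simp [InnerProductSpace.toDual_apply_apply, Complex.inner, hx]
    rw [heq]
    exact hd.hasFDerivAt
  rw [hgrad.gradient]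
  have : ((fderiv ℝ u 0 1 : ℝ) : ℂ) - Complex.I * ((fderiv ℝ u 0 Complex.I : ℝ) : ℂ)
      = (starRingEnd ℂ) x := by
    apply Complex.ext <;> simp [hx]
  rw [this, Complex.norm_conj]

lemma eps_le {x y : ℝ} (h : ∀ ε : ℝ, 0 < ε → x ≤ (1+ε)*y) (hy : 0 ≤ y) : x ≤ y := by
  by_contra hc
  push_neg at hc
  have h1 := h ((x - y)/(2*(y+1))) (div_pos (by linarith) (by linarith))
  have key : (x - y)/(2*(y+1)) * y ≤ (x - y)/2 := by
    rw [div_mul_eq_mul_div, div_le_div_iff₀ (by linarith) (by norm_num)]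
    nlinarith
  nlinarith [h1, key]

lemma quad_bound {x β s T : ℝ} (hx0 : 0 ≤ x) (hx1 : x ≤ 1) (hβ0 : 0 ≤ β) (hβ1 : β ≤ 1)
    (hs0 : 0 ≤ s) (hs1 : s < 1) (hT : T ≤ β * x)
    (hmain : β^2 + x^2 - 2*T ≤ s^2 * (1 + β^2*x^2 - 2*T)) :
    x * (1 + β*s) ≤ β + s := by
  have h1 : (0:ℝ) ≤ 1 - s^2 := by nlinarith
  have hE : ((1+s*β)*x - (β+s)) * ((1-s*β)*x - (β-s)) ≤ 0 := by
    nlinarith [mul_nonneg h1 (sub_nonneg.2 hT)]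
  nlinarith [hE, mul_nonneg hs0 (by nlinarith : (0:ℝ) ≤ 1 - β*x)]

lemma mobius_bound {p q : ℂ} (hp : Complex.normSq p ≤ 1) (hq : Complex.normSq q ≤ 1) :
    ‖p - q‖ ≤ ‖1 - (starRingEnd ℂ) p * q‖ := by
  rw [Complex.norm_def, Complex.norm_def]
  apply Real.sqrt_le_sqrt
  simp only [Complex.normSq_apply, Complex.sub_re, Complex.sub_im, Complex.mul_re, Complex.mul_im,
    Complex.one_re, Complex.one_im] at *
  simp only [RingHom.coe_coe, Complex.conj_re, Complex.conj_im] at *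
  nlinarith [mul_nonneg (sub_nonneg.2 hp) (sub_nonneg.2 hq)]

lemma normSq_sub' (ξ η : ℂ) :
    Complex.normSq (ξ - η) = Complex.normSq ξ + Complex.normSq η - 2 * ((starRingEnd ℂ) ξ * η).re := by
  simp only [Complex.normSq_apply, Complex.sub_re, Complex.sub_im, Complex.mul_re, Complex.mul_im,
    Complex.conj_re, Complex.conj_im, RingHom.coe_coe]
  ring

lemma schwarz_pick_unit {Φ : ℂ → ℂ} (hΦd : DifferentiableOn ℂ Φ (Metric.ball (0:ℂ) 1))
    (hΦ0 : Φ 0 = 0) (hΦmaps : Set.MapsTo Φ (Metric.ball (0:ℂ) 1) (Metric.ball (Φ 0) 1)) :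
    ∀ w ∈ Metric.ball (0:ℂ) 1,
      ‖Φ w‖ * (1 + ‖deriv Φ 0‖ * ‖w‖) ≤
        ‖w‖ * (‖deriv Φ 0‖ + ‖w‖) := by
  -- dslope
  set ψ : ℂ → ℂ := dslope Φ 0 with hψ
  have hψd : DifferentiableOn ℂ ψ (Metric.ball (0:ℂ) 1) :=
    (differentiableOn_dslope (Metric.ball_mem_nhds _ one_pos)).mpr hΦd
  have hψle : ∀ w ∈ Metric.ball (0:ℂ) 1, ‖ψ w‖ ≤ 1 := by
    intro w hw
    have h := Complex.norm_dslope_le_div_of_mapsTo_ball hΦd (hΦmaps.mono_right Metric.ball_subset_closedBall) hw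
    simpa using h
  set b : ℂ := ψ 0 with hb
  have hβ1 : ‖b‖ ≤ 1 := hψle 0 (Metric.mem_ball_self one_pos)
  have hΦψ : ∀ w, Φ w = w * ψ w := by
    intro w
    rcases eq_or_ne w 0 with rfl | hne
    · simp [hΦ0]
    · rw [hψ, dslope_of_ne _ hne, slope_def_field, hΦ0]
      field_simp
      ring
  have key : ∀ w ∈ Metric.ball (0:ℂ) 1,
      ‖Φ w‖ * (1 + ‖b‖ * ‖w‖) ≤
        ‖w‖ * (‖b‖ + ‖w‖) := by
    intro w hw
    have hw1 : ‖w‖ < 1 := by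
      exact mem_ball_zero_iff.mp hw
    by_cases hβlt : ‖b‖ < 1
    · -- second Möbius + Schwarz
      set χ : ℂ → ℂ := fun v => (b - ψ v)/(1 - (starRingEnd ℂ) b * ψ v) with hχ
      have hdenχ : ∀ v ∈ Metric.ball (0:ℂ) 1, (1:ℂ) - (starRingEnd ℂ) b * ψ v ≠ 0 := by
        intro v hv h0
        have h1 : (1:ℂ) = (starRingEnd ℂ) b * ψ v := by
          have := sub_eq_zero.mp h0; exact this
        have h2 : (1:ℝ) = ‖b‖ * ‖ψ v‖ := by
          calc (1:ℝ) = ‖(starRingEnd ℂ) b * ψ v‖ := by rw [← h1]; simp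
          _ = ‖b‖ * ‖ψ v‖ := by rw [norm_mul, Complex.norm_conj]
        nlinarith [hψle v hv, norm_nonneg (ψ v), norm_nonneg b]
      have hχd : DifferentiableOn ℂ χ (Metric.ball (0:ℂ) 1) :=
        ((differentiableOn_const b).sub hψd).div
          ((differentiableOn_const 1).sub ((differentiableOn_const _).mul hψd)) hdenχ
      have hχ0 : χ 0 = 0 := by
        simp only [hχ, ← hb, sub_self, zero_div]
      have hχle : ∀ v ∈ Metric.ball (0:ℂ) 1, ‖χ v‖ ≤ 1 := by
        intro v hv
        rw [hχ]
        simp only [norm_div]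
        rw [div_le_one (norm_pos_iff.mpr (hdenχ v hv))]
        apply mobius_bound
        · rw [← Complex.sq_norm]; nlinarith [norm_nonneg b]
        · rw [← Complex.sq_norm]; nlinarith [hψle v hv, norm_nonneg (ψ v)]
      have hχw : ‖χ w‖ ≤ ‖w‖ := by
        apply eps_le _ (norm_nonneg w)
        intro ε hε
        have hmapsχ : Set.MapsTo χ (Metric.ball (0:ℂ) 1) (Metric.ball (χ 0) (1+ε)) := by
          intro v hv
          rw [hχ0, mem_ball_zero_iff]
          exact lt_of_le_of_lt (hχle v hv) (by linarith)
        have h := Complex.dist_le_div_mul_dist_of_mapsTo_ball hχd (hmapsχ.mono_right Metric.ball_subset_closedBall) hw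
        rw [hχ0] at h
        simpa [Complex.dist_eq] using h
      have hnum : ‖b - ψ w‖ ≤
          ‖w‖ * ‖1 - (starRingEnd ℂ) b * ψ w‖ := by
        have h1 := hχw
        rw [hχ] at h1
        simp only [norm_div] at h1
        rwa [div_le_iff₀ (norm_pos_iff.mpr (hdenχ w hw))] at h1
      have hT : ((starRingEnd ℂ) b * ψ w).re ≤ ‖b‖ * ‖ψ w‖ := by
        refine le_trans (Complex.re_le_norm _) ?_
        rw [norm_mul, Complex.norm_conj]
      have hmain : (‖b‖)^2 + (‖ψ w‖)^2 - 2*((starRingEnd ℂ) b * ψ w).re ≤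
          (‖w‖)^2 * (1 + (‖b‖)^2*(‖ψ w‖)^2
            - 2*((starRingEnd ℂ) b * ψ w).re) := by
        have h2 := mul_self_le_mul_self (norm_nonneg _) hnum
        rw [← pow_two, ← pow_two] at h2
        rw [mul_pow, Complex.sq_norm (b - ψ w), Complex.sq_norm (1 - (starRingEnd ℂ) b * ψ w)] at h2
        rw [normSq_sub' b (ψ w), normSq_sub' 1 ((starRingEnd ℂ) b * ψ w)] at h2
        simp only [map_one, one_mul, Complex.normSq_one, Complex.normSq_mul,
          Complex.normSq_conj] at h2
        rw [← Complex.sq_norm b, ← Complex.sq_norm (ψ w)] at h2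
        nlinarith [h2]
      have hquad := quad_bound (norm_nonneg (ψ w)) (hψle w hw)
        (norm_nonneg b) hβ1 (norm_nonneg w) hw1 hT hmain
      rw [hΦψ w, norm_mul]
      nlinarith [hquad, norm_nonneg w]
    · -- |b| = 1
      have hΦw : ‖Φ w‖ ≤ ‖w‖ := by
        have h := Complex.dist_le_div_mul_dist_of_mapsTo_ball hΦd (hΦmaps.mono_right Metric.ball_subset_closedBall) hw
        rw [hΦ0] at h
        simpa [Complex.dist_eq] using h
      have hβeq : ‖b‖ = 1 := le_antisymm hβ1 (not_lt.mp hβlt)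
      rw [hβeq]
      nlinarith [hΦw, norm_nonneg w, norm_nonneg (Φ w)]
  have hbd : deriv Φ 0 = b := by rw [hb, hψ, dslope_same]
  rw [hbd]
  exact key

lemma schwarz_step {F : ℂ → ℂ} {ρ a : ℝ} {c z : ℂ} (hρ0 : 0 < ρ) (ha : 0 < a)
    (hFd : DifferentiableOn ℂ F (Metric.ball (0:ℂ) ρ)) (hF0 : F 0 = (a:ℂ))
    (hF' : HasDerivAt F c 0)
    (hFre : ∀ w ∈ Metric.ball (0:ℂ) ρ, 0 < (F w).re) (hz : z ∈ Metric.ball (0:ℂ) ρ) :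
    a * (1 - (‖z‖ / ρ)^2) ≤
      (F z).re * (1 + (‖z‖ / ρ)^2 +
        2*(ρ * ‖c‖ / (2*a))*(‖z‖ / ρ)) := by
  have haC : ((a:ℂ)) ≠ 0 := by exact_mod_cast ha.ne'
  have hρC : ((ρ:ℂ)) ≠ 0 := by exact_mod_cast hρ0.ne'
  -- the Möbius transform of F
  set φ : ℂ → ℂ := fun w => (F w - a)/(F w + a) with hφ
  have hden : ∀ w ∈ Metric.ball (0:ℂ) ρ, F w + a ≠ 0 := by
    intro w hw h0
    have : (F w + a).re = 0 := by rw [h0]; simp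
    simp only [Complex.add_re, Complex.ofReal_re] at this
    nlinarith [hFre w hw]
  have hφd : DifferentiableOn ℂ φ (Metric.ball (0:ℂ) ρ) :=
    ((hFd.sub (differentiableOn_const _)).div (hFd.add (differentiableOn_const _)) hden)
  have hφ0 : φ 0 = 0 := by
    simp only [hφ, hF0, sub_self, zero_div]
  have hφmaps : ∀ w ∈ Metric.ball (0:ℂ) ρ, ‖φ w‖ < 1 := by
    intro w hw
    have h1 : ‖F w - a‖ < ‖F w + a‖ := by
      have h2 : ‖F w - a‖^2 < ‖F w + a‖^2 := by
        rw [Complex.sq_norm, Complex.sq_norm]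
        simp only [Complex.normSq_apply, Complex.add_re, Complex.add_im, Complex.sub_re,
          Complex.sub_im, Complex.ofReal_re, Complex.ofReal_im]
        nlinarith [hFre w hw]
      exact lt_of_pow_lt_pow_left₀ 2 (norm_nonneg _) h2
    rw [hφ]
    simp only [norm_div]
    rw [div_lt_one (norm_pos_iff.mpr (hden w hw))]
    exact h1
  -- rescale to the unit ball
  set Φ : ℂ → ℂ := fun w => φ ((ρ:ℂ) * w) with hΦ
  have hmul : ∀ w ∈ Metric.ball (0:ℂ) 1, ((ρ:ℂ) * w) ∈ Metric.ball (0:ℂ) ρ := by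
    intro w hw
    simp only [mem_ball_zero_iff] at hw ⊢
    rw [norm_mul]
    simp only [Complex.norm_real, Real.norm_eq_abs, abs_of_pos hρ0]
    nlinarith [norm_nonneg w, hw]
  have hΦd : DifferentiableOn ℂ Φ (Metric.ball (0:ℂ) 1) := by
    apply DifferentiableOn.comp hφd
    · exact (differentiable_const _).mul differentiable_id |>.differentiableOn
    · exact hmul
  have hΦ0 : Φ 0 = 0 := by simp [hΦ, hφ0]
  have hΦmaps : Set.MapsTo Φ (Metric.ball (0:ℂ) 1) (Metric.ball (Φ 0) 1) := by
    rw [hΦ0]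
    intro w hw
    rw [mem_ball_zero_iff]
    exact hφmaps _ (hmul w hw)
  have key := schwarz_pick_unit hΦd hΦ0 hΦmaps
  set b : ℂ := deriv Φ 0 with hb
  -- the derivative of Φ at 0
  set B : ℝ := ρ * ‖c‖ / (2*a) with hB
  have hden0 : F 0 + (a:ℂ) ≠ 0 := hden 0 (mem_ball_self hρ0)
  have hφ' : HasDerivAt φ (c / (2*(a:ℂ))) 0 := by
    have h1 : HasDerivAt (fun w => F w - (a:ℂ)) c 0 := hF'.sub_const _
    have h2 : HasDerivAt (fun w => F w + (a:ℂ)) c 0 := hF'.add_const _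
    have h3 : HasDerivAt φ ((c * (F 0 + ↑a) - (F 0 - ↑a) * c) / (F 0 + ↑a) ^ 2) 0 := h1.div h2 hden0
    convert h3 using 1
    rw [hF0]
    have h2a : (a:ℂ) + (a:ℂ) ≠ 0 := by
      rw [← two_mul]
      simp [haC]
    field_simp
    ring
  have hΦ' : HasDerivAt Φ (c / (2*(a:ℂ)) * (ρ:ℂ)) 0 := by
    have hf : HasDerivAt (fun w : ℂ => (ρ:ℂ) * w) ((ρ:ℂ)) 0 := by
      simpa using (hasDerivAt_id (0:ℂ)).const_mul ((ρ:ℂ))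
    have h0 : ((ρ:ℂ) * 0) = 0 := mul_zero _
    rw [← h0] at hφ'
    exact HasDerivAt.comp 0 hφ' hf
  have hbval : b = c / (2*(a:ℂ)) * (ρ:ℂ) := by
    rw [hb]
    exact hΦ'.deriv
  have hβval : ‖b‖ = B := by
    rw [hbval, hB, norm_mul, norm_div, Complex.norm_real, Real.norm_eq_abs, abs_of_pos hρ0]
    rw [show ((2:ℂ)*(a:ℂ)) = (((2*a : ℝ)):ℂ) by push_cast; ring]
    rw [Complex.norm_real, Real.norm_eq_abs, abs_of_pos (by linarith)]
    ring
  -- plug in w = z/ρ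
  set s : ℝ := ‖z‖ / ρ with hs
  set w : ℂ := z / (ρ:ℂ) with hwdef
  have hsw : ‖w‖ = s := by
    rw [hwdef, norm_div, Complex.norm_real, Real.norm_eq_abs, abs_of_pos hρ0]
  have hwmem : w ∈ Metric.ball (0:ℂ) 1 := by
    rw [mem_ball_zero_iff, hsw, hs, div_lt_one hρ0]
    exact mem_ball_zero_iff.mp hz
  have hs1 : s < 1 := by
    rw [← hsw]
    exact mem_ball_zero_iff.mp hwmem
  have hs0 : 0 ≤ s := by
    rw [← hsw]; exact norm_nonneg w
  have hB0 : 0 ≤ B := by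
    rw [hB]; positivity
  have hΦw : Φ w = φ z := by
    rw [hΦ]
    simp only
    congr 1
    rw [hwdef]
    field_simp
  have hkey := key w hwmem
  rw [hΦw, hsw, hβval] at hkey
  -- pass to real parts
  set t : ℝ := ‖φ z‖ with htdef
  have ht1 : t < 1 := hφmaps z hz
  have ht0 : 0 ≤ t := norm_nonneg _
  have hprod : F z * (1 - φ z) = (a:ℂ) * (1 + φ z) := by
    have hd := hden z hz
    simp only [hφ] at hd ⊢
    field_simp
    ring
  have hre : (F z).re * Complex.normSq (1 - φ z) = a * (1 - Complex.normSq (φ z)) := by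
    have h1 := congrArg (fun ξ : ℂ => (ξ * (starRingEnd ℂ) (1 - φ z)).re) hprod
    simp only [mul_assoc, Complex.mul_conj] at h1
    simp only [Complex.mul_re, Complex.mul_im, Complex.add_re, Complex.add_im, Complex.sub_re,
      Complex.sub_im, Complex.one_re, Complex.one_im, Complex.ofReal_re, Complex.ofReal_im,
      Complex.conj_re, Complex.conj_im, RingHom.coe_coe, Complex.normSq_apply] at h1 ⊢
    linear_combination h1
  have habs1 : Complex.normSq (1 - φ z) ≤ (1 + t)^2 := by
    rw [← Complex.sq_norm]
    have h1 : ‖1 - φ z‖ ≤ 1 + t := by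
      have hn := norm_sub_le (1:ℂ) (φ z)
      simpa using hn
    nlinarith [norm_nonneg (1 - φ z)]
  have hnsq : Complex.normSq (φ z) = t^2 := (Complex.sq_norm (φ z)).symm
  rw [hnsq] at hre
  have hA : 0 < (F z).re := hFre z hz
  have step1 : a * (1 - t) ≤ (F z).re * (1 + t) := by
    nlinarith [mul_le_mul_of_nonneg_left habs1 hA.le, hre]
  have step2 : (1 - s^2)*(1+t) ≤ (1-t)*(1 + s^2 + 2*B*s) := by
    nlinarith [hkey]
  nlinarith [mul_le_mul_of_nonneg_right step1 (by nlinarith : (0:ℝ) ≤ 1 + s^2 + 2*B*s),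
    mul_le_mul_of_nonneg_left step2 ha.le, ht0, ht1]

/-- Strengthened Harnack inequality (lower bound) for positive harmonic
functions on the unit disc. -/
theorem strong_harnack_lower (u : ℂ → ℝ)
(hreg : ContDiffOn ℝ 2 u (Metric.ball (0:ℂ) 1))
    (hlap : ∀ z ∈ Metric.ball (0:ℂ) 1,
      fderiv ℝ (fun w => fderiv ℝ u w 1) z 1 +
      fderiv ℝ (fun w => fderiv ℝ u w Complex.I) z Complex.I = 0)
    (hpos : ∀ z ∈ Metric.ball (0:ℂ) 1, 0 < u z)
    (z : ℂ) (hz : z ∈ Metric.ball (0:ℂ) 1) :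
    ((1 + ‖z‖ ^ 2) / (1 - ‖z‖ ^ 2) +
      (‖gradient u 0‖ / u 0) * (‖z‖ / (1 - ‖z‖ ^ 2)))⁻¹ ≤
      u z / u 0 := by
  have h01 : (0:ℂ) ∈ Metric.ball (0:ℂ) 1 := mem_ball_self one_pos
  have ha : 0 < u 0 := hpos 0 h01
  set g : ℂ → ℂ := fun w =>
    ((fderiv ℝ u w 1 : ℝ) : ℂ) - Complex.I * ((fderiv ℝ u w Complex.I : ℝ) : ℂ) with hg
  have hgd : DifferentiableOn ℂ g (Metric.ball (0:ℂ) 1) := holo_g u hreg hlap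
  have hG : ‖gradient u 0‖ = ‖g 0‖ :=
    grad_norm u ((hreg.contDiffAt (isOpen_ball.mem_nhds h01)).differentiableAt (by norm_num))
  set r := ‖z‖ with hr
  have hr1 : r < 1 := by
    rw [hr]; exact mem_ball_zero_iff.mp hz
  have hr0 : 0 ≤ r := norm_nonneg z
  set G := ‖g 0‖ with hGdef
  have hG0 : 0 ≤ G := norm_nonneg _
  -- the bound for each radius ρ < 1
  have main : ∀ ρ : ℝ, r < ρ → ρ < 1 →
      u 0 * (1 - (r/ρ)^2) ≤ u z * (1 + (r/ρ)^2 + 2*(ρ * G / (2*(u 0)))*(r/ρ)) := by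
    intro ρ hρr hρ1
    have hρ0 : 0 < ρ := lt_of_le_of_lt hr0 hρr
    obtain ⟨F, hF0, hF⟩ := exists_primitive hgd hρ0 hρ1 ((u 0 : ℝ) : ℂ)
    have hre : ∀ w ∈ Metric.ball (0:ℂ) ρ, (F w).re = u w := by
      apply re_F u hreg hρ0 hρ1 F hF0
      intro w hw
      exact hF w hw
    have hFd : DifferentiableOn ℂ F (Metric.ball (0:ℂ) ρ) :=
      fun w hw => (hF w hw).differentiableAt.differentiableWithinAt
    have hF' : HasDerivAt F (g 0) 0 := hF 0 (mem_ball_self hρ0)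
    have hFre : ∀ w ∈ Metric.ball (0:ℂ) ρ, 0 < (F w).re := by
      intro w hw
      rw [hre w hw]
      exact hpos w (Metric.ball_subset_ball hρ1.le hw)
    have hzρ : z ∈ Metric.ball (0:ℂ) ρ := by
      rw [mem_ball_zero_iff, ← hr]; exact hρr
    have h := schwarz_step hρ0 ha hFd hF0 hF' hFre hzρ
    rw [hre z hzρ] at h
    exact h
  -- pass to the limit ρ → 1⁻
  have hlim : u 0 * (1 - r^2) ≤ u z * (1 + r^2 + 2*(G/(2*(u 0)))*r) := by
    have hne : (𝓝[<] (1:ℝ)).NeBot := nhdsLT_neBot 1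
    have hc1 : ContinuousAt (fun ρ : ℝ => r/ρ) 1 :=
      continuousAt_const.div continuousAt_id (by norm_num)
    have hL : Tendsto (fun ρ : ℝ => u 0 * (1 - (r/ρ)^2)) (𝓝[<] (1:ℝ))
        (𝓝 (u 0 * (1 - r^2))) := by
      apply Tendsto.mono_left _ nhdsWithin_le_nhds
      have : ContinuousAt (fun ρ : ℝ => u 0 * (1 - (r/ρ)^2)) 1 :=
        continuousAt_const.mul (continuousAt_const.sub (hc1.pow 2))
      simpa using this.tendsto
    have hR : Tendsto (fun ρ : ℝ => u z * (1 + (r/ρ)^2 + 2*(ρ * G / (2*(u 0)))*(r/ρ)))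
        (𝓝[<] (1:ℝ)) (𝓝 (u z * (1 + r^2 + 2*(G/(2*(u 0)))*r))) := by
      apply Tendsto.mono_left _ nhdsWithin_le_nhds
      have : ContinuousAt (fun ρ : ℝ =>
          u z * (1 + (r/ρ)^2 + 2*(ρ * G / (2*(u 0)))*(r/ρ))) 1 := by
        apply continuousAt_const.mul
        apply ContinuousAt.add
        · exact continuousAt_const.add (hc1.pow 2)
        · exact (continuousAt_const.mul ((continuousAt_id.mul continuousAt_const).div
            continuousAt_const (by positivity))).mul hc1
      simpa using this.tendsto
    refine le_of_tendsto_of_tendsto hL hR ?_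
    have hIoo : Set.Ioo r 1 ∈ 𝓝[<] (1:ℝ) := Ioo_mem_nhdsLT_of_mem ⟨hr1, le_rfl⟩
    filter_upwards [hIoo] with ρ hρ
    exact main ρ hρ.1 hρ.2
  -- final algebra
  rw [hG]
  have hz' : 0 < u z := hpos z hz
  have h1r : 0 < 1 - r^2 := by nlinarith
  have hDpos : 0 < u 0*(1+r^2)+G*r := by nlinarith [mul_nonneg hG0 hr0]
  have hD : (1 + r^2)/(1-r^2) + G/(u 0)*(r/(1-r^2)) = (u 0*(1+r^2)+G*r)/(u 0*(1-r^2)) := by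
    field_simp
  rw [hD, inv_div, div_le_div_iff₀ (by positivity) ha]
  have key2 : (1 + r^2 + 2*(G/(2*(u 0)))*r)*(u 0) = u 0*(1+r^2)+G*r := by
    field_simp
  have hlim2 := mul_le_mul_of_nonneg_right hlim ha.le
  have key3 : (1 + r^2 + 2*(G/(2*(u 0)))*r) * u z * u 0 = u z * (u 0*(1+r^2)+G*r) := by
    rw [← key2]; ring
  linarith [hlim2, key3.le, key3.ge]
end

section
/- (Harnack's inequality) Let u : 𝕌 → (0, +∞) be a positive harmonic function on the open unit disc. Then for every z ∈ 𝕌, (1−|z|)/(1+|z|) ≤ u(z)/u(0) ≤ (1+|z|)/(1−|z|). -/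
open Metric Set intervalIntegral MeasureTheory
open scoped Interval

lemma clm_ext_ri {E : Type*} [NormedAddCommGroup E] [NormedSpace ℝ E]
    {L₁ L₂ : ℂ →L[ℝ] E} (h1 : L₁ 1 = L₂ 1) (hI : L₁ Complex.I = L₂ Complex.I) : L₁ = L₂ := by
  ext w
  rw [← Complex.re_add_im w]
  have e1 : (↑w.re : ℂ) = w.re • (1:ℂ) := by simp [Complex.real_smul]
  have e2 : (↑w.im : ℂ) * Complex.I = w.im • Complex.I := by simp [Complex.real_smul]
  rw [e1, e2, map_add, map_add, L₁.map_smul, L₁.map_smul, L₂.map_smul, L₂.map_smul, h1, hI]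

lemma primitive_hasDerivAt {g : ℂ → ℂ} (hg : DifferentiableOn ℂ g (ball 0 1))
    {z₀ : ℂ} (hz₀ : z₀ ∈ ball (0:ℂ) 1) :
    HasDerivAt (fun z => ∫ t in (0:ℝ)..1, g (↑t * z) * z) (g z₀) z₀ := by
  have hga : AnalyticOnNhd ℂ g (ball 0 1) := hg.analyticOnNhd isOpen_ball
  have hgc : ContinuousOn g (ball 0 1) := hg.continuousOn
  have hgc' : ContinuousOn (deriv g) (ball 0 1) := (hga.deriv).continuousOn
  set r : ℝ := (1 + ‖z₀‖) / 2 with hr_def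
  have hz₀1 : ‖z₀‖ < 1 := by simpa using mem_ball_zero_iff.1 hz₀
  have hr1 : r < 1 := by simp only [hr_def]; linarith
  have hrz : ‖z₀‖ < r := by simp only [hr_def]; linarith
  have hr0 : 0 < r := lt_of_le_of_lt (norm_nonneg z₀) hrz
  have hKsub : closedBall (0:ℂ) r ⊆ ball 0 1 := closedBall_subset_ball hr1
  obtain ⟨M, hM⟩ := (isCompact_closedBall (0:ℂ) r).exists_bound_of_continuousOn
    (hgc.mono hKsub)
  obtain ⟨M', hM'⟩ := (isCompact_closedBall (0:ℂ) r).exists_bound_of_continuousOn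
    (hgc'.mono hKsub)
  set ε : ℝ := (1 - ‖z₀‖) / 2 with hε_def
  have hε : 0 < ε := by simp only [hε_def]; linarith
  -- membership facts
  have hmem : ∀ x : ℂ, x ∈ ball z₀ ε → ∀ t : ℝ, t ∈ Set.Icc (0:ℝ) 1 → (↑t * x) ∈ closedBall (0:ℂ) r := by
    intro x hx t ht
    have hxr : ‖x‖ < r := by
      have := mem_ball_iff_norm.1 hx
      calc ‖x‖ = ‖x - z₀ + z₀‖ := by norm_num
      _ ≤ ‖x - z₀‖ + ‖z₀‖ := norm_add_le _ _
      _ < ε + ‖z₀‖ := by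
          linarith
      _ ≤ r := by simp only [hε_def, hr_def]; linarith
    rw [mem_closedBall_zero_iff]
    calc ‖↑t * x‖ = |t| * ‖x‖ := by simp
    _ ≤ 1 * r := by
        apply mul_le_mul (abs_le.2 ⟨by linarith [ht.1], ht.2⟩) hxr.le (norm_nonneg x) one_pos.le
    _ = r := one_mul r
  have hmemI : ∀ x : ℂ, x ∈ ball z₀ ε → ∀ t : ℝ, t ∈ Ι (0:ℝ) 1 → (↑t * x) ∈ closedBall (0:ℂ) r := by
    intro x hx t ht
    rw [Set.uIoc_of_le (by norm_num : (0:ℝ) ≤ 1)] at ht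
    exact hmem x hx t ⟨ht.1.le, ht.2⟩
  have hz₀self : z₀ ∈ ball z₀ ε := mem_ball_self hε
  -- the candidate derivative family
  set F' : ℂ → ℝ → ℂ →L[ℂ] ℂ := fun x t =>
    ContinuousLinearMap.smulRight (1 : ℂ →L[ℂ] ℂ) (deriv g (↑t * x) * ↑t * x + g (↑t * x)) with hF'_def
  -- continuity in t of the scalar, for fixed x
  have hcont_scal : ∀ x : ℂ, x ∈ ball z₀ ε →
      ContinuousOn (fun t : ℝ => deriv g (↑t * x) * ↑t * x + g (↑t * x)) (Set.Icc (0:ℝ) 1) := by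
    intro x hx
    have hmaps : Set.MapsTo (fun t : ℝ => (↑t * x : ℂ)) (Set.Icc (0:ℝ) 1) (ball (0:ℂ) 1) :=
      fun t ht => hKsub (hmem x hx t ht)
    have hc1 : ContinuousOn (fun t : ℝ => (↑t * x : ℂ)) (Set.Icc (0:ℝ) 1) :=
      (Complex.continuous_ofReal.mul continuous_const).continuousOn
    exact (((hgc'.comp hc1 hmaps).mul (Complex.continuous_ofReal.continuousOn)).mul
      continuousOn_const).add (hgc.comp hc1 hmaps)
  have hcont_g : ∀ x : ℂ, x ∈ ball z₀ ε →
      ContinuousOn (fun t : ℝ => g (↑t * x) * x) (Set.Icc (0:ℝ) 1) := by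
    intro x hx
    have hmaps : Set.MapsTo (fun t : ℝ => (↑t * x : ℂ)) (Set.Icc (0:ℝ) 1) (ball (0:ℂ) 1) :=
      fun t ht => hKsub (hmem x hx t ht)
    have hc1 : ContinuousOn (fun t : ℝ => (↑t * x : ℂ)) (Set.Icc (0:ℝ) 1) :=
      (Complex.continuous_ofReal.mul continuous_const).continuousOn
    exact (hgc.comp hc1 hmaps).mul continuousOn_const
  have hIcc : Ι (0:ℝ) 1 ⊆ Set.Icc (0:ℝ) 1 := by
    rw [Set.uIoc_of_le (by norm_num : (0:ℝ) ≤ 1)]; exact Set.Ioc_subset_Icc_self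
  -- differentiability in x
  have hdiff : ∀ t ∈ Ι (0:ℝ) 1, ∀ x ∈ ball z₀ ε,
      HasDerivAt (fun x => g (↑t * x) * x) (deriv g (↑t * x) * ↑t * x + g (↑t * x)) x := by
    intro t ht x hx
    have h1 : HasDerivAt (fun x : ℂ => (↑t * x : ℂ)) (↑t) x := by
      simpa using (hasDerivAt_id x).const_mul (↑t : ℂ)
    have hg' : HasDerivAt g (deriv g (↑t * x)) (↑t * x) :=
      ((hga _ (hKsub (hmemI x hx t ht))).differentiableAt).hasDerivAt
    have h2 : HasDerivAt (fun x : ℂ => g (↑t * x)) (deriv g (↑t * x) * ↑t) x := hg'.comp x h1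
    have h3 := h2.mul (hasDerivAt_id x)
    simp only [id_eq] at h3
    exact h3.congr_deriv (by ring)
  -- apply dominated differentiation
  have key := intervalIntegral.hasFDerivAt_integral_of_dominated_of_fderiv_le
    (𝕜 := ℂ) (μ := volume) (F := fun x t => g (↑t * x) * x) (F' := F') (x₀ := z₀)
    (a := 0) (b := 1) (bound := fun _ => M' * r + M) (s := ball z₀ ε) (ball_mem_nhds z₀ hε)
    ?_ ?_ ?_ ?_ ?_ ?_
  · -- conclude
    have hF'int : IntervalIntegrable (F' z₀) volume 0 1 := by
      apply ContinuousOn.intervalIntegrable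
      rw [Set.uIcc_of_le (by norm_num : (0:ℝ) ≤ 1)]
      have : ContinuousOn (fun t : ℝ => deriv g (↑t * z₀) * ↑t * z₀ + g (↑t * z₀)) (Set.Icc (0:ℝ) 1) :=
        hcont_scal z₀ hz₀self
      exact ((ContinuousLinearMap.smulRightL ℂ ℂ ℂ (1 : ℂ →L[ℂ] ℂ)).continuous.comp_continuousOn this)
    have hFTC : (∫ t in (0:ℝ)..1, (deriv g (↑t * z₀) * ↑t * z₀ + g (↑t * z₀))) = g z₀ := by
      have hderiv : ∀ t ∈ Set.uIcc (0:ℝ) 1,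
          HasDerivAt (fun t : ℝ => (↑t : ℂ) * g (↑t * z₀))
            (deriv g (↑t * z₀) * ↑t * z₀ + g (↑t * z₀)) t := by
        intro t ht
        rw [Set.uIcc_of_le (by norm_num : (0:ℝ) ≤ 1)] at ht
        have hmem' : (↑t * z₀ : ℂ) ∈ ball (0:ℂ) 1 := hKsub (hmem z₀ hz₀self t ht)
        have hinner : HasDerivAt (fun w : ℂ => w * z₀) z₀ (↑t : ℂ) := by
          simpa using (hasDerivAt_id (↑t : ℂ)).mul_const z₀
        have houter : HasDerivAt g (deriv g (↑t * z₀)) (↑t * z₀) :=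
          ((hga _ hmem').differentiableAt).hasDerivAt
        have hcomp : HasDerivAt (fun w : ℂ => g (w * z₀)) (deriv g (↑t * z₀) * z₀) (↑t : ℂ) :=
          HasDerivAt.comp (h := fun w : ℂ => w * z₀) (h₂ := g) (↑t : ℂ) houter hinner
        have hcomp' : HasDerivAt (fun s : ℝ => g (↑s * z₀)) (deriv g (↑t * z₀) * z₀) t :=
          hcomp.comp_ofReal
        have hid : HasDerivAt (fun s : ℝ => (↑s : ℂ)) 1 t := by
          have h := Complex.ofRealCLM.hasDerivAt (x := t)
          rw [Complex.ofRealCLM_apply, Complex.ofReal_one] at h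
          exact h
        have := hid.mul hcomp'
        exact this.congr_deriv (by ring)
      have hint : IntervalIntegrable (fun t : ℝ => deriv g (↑t * z₀) * ↑t * z₀ + g (↑t * z₀))
          volume 0 1 := by
        apply ContinuousOn.intervalIntegrable
        rw [Set.uIcc_of_le (by norm_num : (0:ℝ) ≤ 1)]
        exact hcont_scal z₀ hz₀self
      rw [intervalIntegral.integral_eq_sub_of_hasDerivAt hderiv hint]
      simp
    rw [hasDerivAt_iff_hasFDerivAt]
    refine key.congr_fderiv ?_
    apply ContinuousLinearMap.ext_ring
    rw [ContinuousLinearMap.intervalIntegral_apply hF'int]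
    simp only [hF'_def, ContinuousLinearMap.smulRight_apply, ContinuousLinearMap.one_apply,
      one_smul]
    rw [hFTC]
    simp
  · -- hF_meas
    filter_upwards [ball_mem_nhds z₀ hε] with x hx
    exact ((hcont_g x hx).mono hIcc).aestronglyMeasurable measurableSet_uIoc
  · -- hF_int
    apply ContinuousOn.intervalIntegrable
    rw [Set.uIcc_of_le (by norm_num : (0:ℝ) ≤ 1)]
    exact hcont_g z₀ hz₀self
  · -- hF'_meas
    have : ContinuousOn (F' z₀) (Ι (0:ℝ) 1) :=
      ((ContinuousLinearMap.smulRightL ℂ ℂ ℂ (1 : ℂ →L[ℂ] ℂ)).continuous.comp_continuousOn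
        ((hcont_scal z₀ hz₀self).mono hIcc))
    exact this.aestronglyMeasurable measurableSet_uIoc
  · -- h_bound
    refine Filter.Eventually.of_forall fun t => fun ht x hx => ?_
    have hmemx := hmemI x hx t ht
    have htabs : |t| ≤ 1 := by
      rw [Set.uIoc_of_le (by norm_num : (0:ℝ) ≤ 1)] at ht
      exact abs_le.2 ⟨by linarith [ht.1.le], ht.2⟩
    have hxr : ‖x‖ ≤ r := by
      have := mem_closedBall_zero_iff.1 (hmem x hx 1 (by norm_num))
      simpa using this
    have e1 : ‖F' x t‖ = ‖deriv g (↑t * x) * ↑t * x + g (↑t * x)‖ := by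
      rw [hF'_def]
      rw [ContinuousLinearMap.norm_smulRight_apply, norm_one, one_mul]
    rw [e1]
    have hb1 : ‖deriv g (↑t * x) * ↑t * x‖ ≤ M' * r := by
      have h1 : ‖deriv g (↑t * x)‖ ≤ M' := hM' _ hmemx
      have h2 : ‖(↑t : ℂ)‖ ≤ 1 := by simpa using htabs
      have h3 : ‖x‖ ≤ r := by simpa using hxr
      have hn1 : (0:ℝ) ≤ ‖deriv g (↑t * x)‖ := norm_nonneg _
      have hn2 : (0:ℝ) ≤ ‖(↑t:ℂ)‖ := norm_nonneg _
      have e2 : ‖deriv g (↑t * x) * ↑t * x‖ = ‖deriv g (↑t * x)‖ * ‖(↑t : ℂ)‖ * ‖x‖ := by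
        simp [norm_mul]
      rw [e2]
      have hM'0 : (0:ℝ) ≤ M' := le_trans hn1 h1
      have k1 : ‖deriv g (↑t * x)‖ * ‖(↑t:ℂ)‖ ≤ M' * 1 := mul_le_mul h1 h2 hn2 hM'0
      have k2 : ‖deriv g (↑t * x)‖ * ‖(↑t:ℂ)‖ * ‖x‖ ≤ M' * 1 * r :=
        mul_le_mul k1 h3 (norm_nonneg x) (by linarith)
      linarith
    calc ‖deriv g (↑t * x) * ↑t * x + g (↑t * x)‖
        ≤ ‖deriv g (↑t * x) * ↑t * x‖ + ‖g (↑t * x)‖ := norm_add_le _ _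
      _ ≤ M' * r + M := add_le_add hb1 (hM _ hmemx)
  · -- bound integrable
    exact intervalIntegrable_const
  · -- h_diff
    refine Filter.Eventually.of_forall fun t => fun ht x hx => ?_
    exact (hasDerivAt_iff_hasFDerivAt.1 (hdiff t ht x hx))


lemma cr_hasDerivAt (u : ℂ → ℝ)
    (hreg : ContDiffOn ℝ 2 u (Metric.ball (0:ℂ) 1))
    (hlap : ∀ z ∈ Metric.ball (0:ℂ) 1,
      fderiv ℝ (fun w => fderiv ℝ u w 1) z 1 +
      fderiv ℝ (fun w => fderiv ℝ u w Complex.I) z Complex.I = 0)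
    {z₀ : ℂ} (hz₀ : z₀ ∈ ball (0:ℂ) 1) :
    DifferentiableAt ℂ
      (fun z => ((fderiv ℝ u z 1 : ℝ) : ℂ) - Complex.I * ((fderiv ℝ u z Complex.I : ℝ) : ℂ)) z₀ := by
  have hnhds : ball (0:ℂ) 1 ∈ nhds z₀ := isOpen_ball.mem_nhds hz₀
  have hC2 : ContDiffAt ℝ 2 u z₀ := hreg.contDiffAt hnhds
  have hC1f : ContDiffAt ℝ 1 (fderiv ℝ u) z₀ := hC2.fderiv_right (by norm_num)
  set f'' := fderiv ℝ (fderiv ℝ u) z₀ with hf''_def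
  have hdf : HasFDerivAt (fderiv ℝ u) f'' z₀ :=
    (hC1f.differentiableAt one_ne_zero).hasFDerivAt
  have hud : ∀ᶠ y in nhds z₀, HasFDerivAt u (fderiv ℝ u y) y := by
    filter_upwards [hnhds] with y hy
    exact ((hreg.contDiffAt (isOpen_ball.mem_nhds hy)).differentiableAt (by norm_num)).hasFDerivAt
  have hsymm : ∀ v w : ℂ, f'' v w = f'' w v :=
    second_derivative_symmetric_of_eventually hud hdf
  -- derivative of z ↦ fderiv ℝ u z v
  have happ : ∀ v : ℂ, HasFDerivAt (fun w => fderiv ℝ u w v)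
      ((ContinuousLinearMap.apply ℝ ℝ v).comp f'') z₀ :=
    fun v => (ContinuousLinearMap.apply ℝ ℝ v).hasFDerivAt.comp z₀ hdf
  -- Laplace at z₀ in terms of f''
  have hlap' : f'' 1 1 + f'' Complex.I Complex.I = 0 := by
    have h1 := (happ 1).fderiv
    have hI := (happ Complex.I).fderiv
    have := hlap z₀ hz₀
    rw [h1, hI] at this
    simpa using this
  set c : ℂ := ((f'' 1 1 : ℝ) : ℂ) - Complex.I * ((f'' 1 Complex.I : ℝ) : ℂ) with hc_def
  have hg1 : HasFDerivAt (fun z => ((fderiv ℝ u z 1 : ℝ) : ℂ))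
      (Complex.ofRealCLM.comp ((ContinuousLinearMap.apply ℝ ℝ 1).comp f'')) z₀ :=
    Complex.ofRealCLM.hasFDerivAt.comp z₀ (happ 1)
  have hg2 : HasFDerivAt (fun z => ((fderiv ℝ u z Complex.I : ℝ) : ℂ))
      (Complex.ofRealCLM.comp ((ContinuousLinearMap.apply ℝ ℝ Complex.I).comp f'')) z₀ :=
    Complex.ofRealCLM.hasFDerivAt.comp z₀ (happ Complex.I)
  have hg2' := hg2.const_mul Complex.I
  have hg := hg1.sub hg2'
  set Lℝ : ℂ →L[ℝ] ℂ :=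
    Complex.ofRealCLM.comp ((ContinuousLinearMap.apply ℝ ℝ 1).comp f'') -
      Complex.I • (Complex.ofRealCLM.comp ((ContinuousLinearMap.apply ℝ ℝ Complex.I).comp f''))
    with hL_def
  have hLeq : Lℝ = (ContinuousLinearMap.smulRight (1 : ℂ →L[ℂ] ℂ) c).restrictScalars ℝ := by
    apply clm_ext_ri
    · simp [hL_def, hc_def]
    · have e1 : f'' Complex.I 1 = f'' 1 Complex.I := hsymm _ _
      have e2 : f'' Complex.I Complex.I = - f'' 1 1 := by linarith [hlap']
      simp only [hL_def, hc_def, ContinuousLinearMap.coe_sub', Pi.sub_apply,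
        ContinuousLinearMap.coe_comp', Function.comp_apply, ContinuousLinearMap.apply_apply,
        Complex.ofRealCLM_apply, ContinuousLinearMap.coe_smul', Pi.smul_apply,
        ContinuousLinearMap.coe_restrictScalars', ContinuousLinearMap.smulRight_apply,
        ContinuousLinearMap.one_apply, smul_eq_mul, e1, e2]
      push_cast
      ring_nf
      simp [Complex.I_sq]
  rw [hLeq] at hg
  have : HasFDerivAt (𝕜 := ℂ)
      (fun z => ((fderiv ℝ u z 1 : ℝ) : ℂ) - Complex.I * ((fderiv ℝ u z Complex.I : ℝ) : ℂ))
      (ContinuousLinearMap.smulRight (1 : ℂ →L[ℂ] ℂ) c) z₀ := by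
    rw [hasFDerivAt_iff_isLittleO_nhds_zero] at hg ⊢
    exact hg
  exact this.differentiableAt


/-- Harnack's inequality for positive harmonic functions on the unit disc. -/
theorem harnack_inequality (u : ℂ → ℝ)
(hreg : ContDiffOn ℝ 2 u (Metric.ball (0:ℂ) 1))
    (hlap : ∀ z ∈ Metric.ball (0:ℂ) 1,
      fderiv ℝ (fun w => fderiv ℝ u w 1) z 1 +
      fderiv ℝ (fun w => fderiv ℝ u w Complex.I) z Complex.I = 0)
    (hpos : ∀ z ∈ Metric.ball (0:ℂ) 1, 0 < u z)
    (z : ℂ) (hz : z ∈ Metric.ball (0:ℂ) 1) :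
    (1 - ‖z‖) / (1 + ‖z‖) ≤ u z / u 0 ∧
      u z / u 0 ≤ (1 + ‖z‖) / (1 - ‖z‖) := by
  set g : ℂ → ℂ := fun w =>
    ((fderiv ℝ u w 1 : ℝ) : ℂ) - Complex.I * ((fderiv ℝ u w Complex.I : ℝ) : ℂ) with hg_def
  have hgdiff : DifferentiableOn ℂ g (ball 0 1) :=
    fun w hw => (cr_hasDerivAt u hreg hlap hw).differentiableWithinAt
  set F : ℂ → ℂ := fun w => ∫ t in (0:ℝ)..1, g (↑t * w) * w with hF_def
  have hF : ∀ w ∈ ball (0:ℂ) 1, HasDerivAt F (g w) w :=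
    fun w hw => primitive_hasDerivAt hgdiff hw
  set f : ℂ → ℂ := fun w => ((u 0 : ℝ) : ℂ) + F w with hf_def
  have hf : ∀ w ∈ ball (0:ℂ) 1, HasDerivAt f (g w) w :=
    fun w hw => (hF w hw).const_add _
  have h0mem : (0:ℂ) ∈ ball (0:ℂ) 1 := mem_ball_self one_pos
  have hF0 : F 0 = 0 := by simp [hF_def]
  have hf0 : f 0 = ((u 0 : ℝ) : ℂ) := by simp [hf_def, hF0]
  -- real part of f equals u on the ball
  have hfre : ∀ w ∈ ball (0:ℂ) 1,
      HasFDerivAt (fun w => (f w).re) (fderiv ℝ u w) w := by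
    intro w hw
    have hfd : HasFDerivAt f (ContinuousLinearMap.smulRight (1 : ℂ →L[ℂ] ℂ) (g w)) w :=
      hasDerivAt_iff_hasFDerivAt.1 (hf w hw)
    have hre' : HasFDerivAt (fun w => (f w).re)
        (Complex.reCLM.comp
          ((ContinuousLinearMap.smulRight (1 : ℂ →L[ℂ] ℂ) (g w)).restrictScalars ℝ)) w :=
      Complex.reCLM.hasFDerivAt.comp w (hfd.restrictScalars ℝ)
    have hclm : Complex.reCLM.comp
        ((ContinuousLinearMap.smulRight (1 : ℂ →L[ℂ] ℂ) (g w)).restrictScalars ℝ)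
        = fderiv ℝ u w := by
      apply clm_ext_ri
      · simp [hg_def]
      · simp [hg_def, Complex.mul_re]
    rwa [hclm] at hre'
  have hre : ∀ w ∈ ball (0:ℂ) 1, u w = (f w).re := by
    intro w hw
    have hder : ∀ y ∈ ball (0:ℂ) 1,
        HasFDerivWithinAt (fun y => u y - (f y).re) (0 : ℂ →L[ℝ] ℝ) (ball (0:ℂ) 1) y := by
      intro y hy
      have hu' : HasFDerivAt u (fderiv ℝ u y) y :=
        ((hreg.contDiffAt (isOpen_ball.mem_nhds hy)).differentiableAt
          (by norm_num)).hasFDerivAt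
      have := hu'.sub (hfre y hy)
      rw [sub_self] at this
      exact this.hasFDerivWithinAt
    have hb := (convex_ball (0:ℂ) 1).norm_image_sub_le_of_norm_hasFDerivWithin_le
      hder (fun y _ => le_of_eq norm_zero) hw h0mem
    simp only [norm_zero, zero_mul] at hb
    have : u w - (f w).re - (u 0 - (f 0).re) = 0 := by
      have h2 := norm_le_zero_iff.1 (by simpa using hb)
      rw [sub_eq_zero] at h2
      rw [h2]
      ring
    have hf0re : (f 0).re = u 0 := by rw [hf0]; simp
    rw [hf0re] at this
    linarith [this]
  -- positivity setup
  have ha : 0 < u 0 := hpos 0 h0mem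
  have hfpos : ∀ w ∈ ball (0:ℂ) 1, 0 < (f w).re := by
    intro w hw; rw [← hre w hw]; exact hpos w hw
  have hden : ∀ w ∈ ball (0:ℂ) 1, f w + ((u 0 : ℝ) : ℂ) ≠ 0 := by
    intro w hw h
    have : (f w + ((u 0 : ℝ) : ℂ)).re = 0 := by rw [h]; simp
    simp only [Complex.add_re, Complex.ofReal_re] at this
    linarith [hfpos w hw]
  -- the Möbius-transformed function
  set φ : ℂ → ℂ := fun w => (f w - ((u 0 : ℝ) : ℂ)) / (f w + ((u 0 : ℝ) : ℂ)) with hφ_def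
  have hfdiffOn : DifferentiableOn ℂ f (ball 0 1) :=
    fun w hw => (hf w hw).differentiableAt.differentiableWithinAt
  have hφdiff : DifferentiableOn ℂ φ (ball 0 1) :=
    DifferentiableOn.div (hfdiffOn.sub_const _) (hfdiffOn.add_const _) hden
  have hlt : ∀ w ∈ ball (0:ℂ) 1,
      ‖f w - ((u 0 : ℝ) : ℂ)‖ < ‖f w + ((u 0 : ℝ) : ℂ)‖ := by
    intro w hw
    have hsq : (‖f w - ((u 0 : ℝ) : ℂ)‖)^2 < (‖f w + ((u 0 : ℝ) : ℂ)‖)^2 := by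
      rw [Complex.sq_norm, Complex.sq_norm]
      simp only [Complex.normSq_apply, Complex.sub_re, Complex.sub_im, Complex.add_re,
        Complex.add_im, Complex.ofReal_re, Complex.ofReal_im, sub_zero, add_zero]
      nlinarith [hfpos w hw, ha]
    exact lt_of_pow_lt_pow_left₀ 2 (norm_nonneg _) hsq
  have hmaps : Set.MapsTo φ (ball (0:ℂ) 1) (ball (0:ℂ) 1) := by
    intro w hw
    rw [mem_ball_zero_iff]
    rw [hφ_def]
    simp only [norm_div]
    rw [div_lt_one (lt_of_le_of_lt (norm_nonneg _) (hlt w hw))]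
    exact hlt w hw
  have hφ0 : φ 0 = 0 := by
    rw [hφ_def]; simp [hf0]
  have hzabs : ‖z‖ < 1 := by
    simpa using mem_ball_zero_iff.1 hz
  have hschwarz : ‖φ z‖ ≤ ‖z‖ :=
    Complex.norm_le_norm_of_mapsTo_ball_self hφdiff (hmaps.mono_right ball_subset_closedBall) hφ0 hzabs
  -- unfold into real inequalities
  set r : ℝ := ‖z‖ with hr_def
  have hr0 : 0 ≤ r := norm_nonneg z
  have hr1 : r < 1 := hzabs
  set x : ℝ := (f z).re with hx_def
  set y : ℝ := (f z).im with hy_def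
  set a : ℝ := u 0 with ha_def
  have hxpos : 0 < x := hfpos z hz
  have hnum : ‖f z - (a : ℂ)‖ ≤ r * ‖f z + (a : ℂ)‖ := by
    have := hschwarz
    rw [hφ_def] at this
    simp only [norm_div] at this
    rw [div_le_iff₀ (lt_of_le_of_lt (norm_nonneg _) (hlt z hz))] at this
    calc ‖f z - (a : ℂ)‖ ≤ ‖z‖ * ‖f z + (a : ℂ)‖ := this
    _ = r * ‖f z + (a : ℂ)‖ := by rw [hr_def]
  have key : (x - a)^2 + y^2 ≤ r^2 * ((x + a)^2 + y^2) := by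
    have h1 : (‖f z - (a : ℂ)‖)^2 ≤ (r * ‖f z + (a : ℂ)‖)^2 :=
      pow_le_pow_left₀ (norm_nonneg _) hnum 2
    have e3 : (‖f z - (a : ℂ)‖)^2 = (x - a)^2 + y^2 := by
      rw [Complex.sq_norm]
      simp only [Complex.normSq_apply, Complex.sub_re, Complex.sub_im, Complex.ofReal_re,
        Complex.ofReal_im, sub_zero]
      ring
    have e4 : (‖f z + (a : ℂ)‖)^2 = (x + a)^2 + y^2 := by
      rw [Complex.sq_norm]
      simp only [Complex.normSq_apply, Complex.add_re, Complex.add_im, Complex.ofReal_re,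
        Complex.ofReal_im, add_zero]
      ring
    rw [mul_pow, e3, e4] at h1
    exact h1
  have hPQ : ((1 - r) * x - (1 + r) * a) * ((1 + r) * x - (1 - r) * a) ≤ 0 := by
    nlinarith [key, mul_nonneg (mul_nonneg (by linarith : (0:ℝ) ≤ 1 - r)
      (by linarith : (0:ℝ) ≤ 1 + r)) (sq_nonneg y)]
  have hQ : 0 ≤ (1 + r) * x - (1 - r) * a := by
    by_contra h
    push_neg at h
    have hP : (1 - r) * x - (1 + r) * a < 0 := by nlinarith [mul_nonneg hr0 (by linarith : (0:ℝ) ≤ x + a)]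
    nlinarith [mul_pos_of_neg_of_neg hP h]
  have hP : (1 - r) * x - (1 + r) * a ≤ 0 := by
    by_contra h
    push_neg at h
    have hQ' : 0 < (1 + r) * x - (1 - r) * a := by nlinarith [mul_nonneg hr0 (by linarith : (0:ℝ) ≤ x + a)]
    nlinarith [mul_pos h hQ']
  have hxu : u z = x := hre z hz
  constructor
  · rw [hxu, div_le_div_iff₀ (by linarith : (0:ℝ) < 1 + r) ha]
    linarith
  · rw [hxu, div_le_div_iff₀ ha (by linarith : (0:ℝ) < 1 - r)]
    linarith
end
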